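/- Let λ ∈ (1/2, (√5 − 1)/2). Then there exists m ∈ ℕ such that λ + λ² + ⋯ + λ^m ≥ 1, and for any such m the equilibrium measure of the overlap satisfies μ_λ( τ₀(X_λ) ∩ τ₁(X_λ) ) = μ_λ([λ, λ²/(1−λ)]) ≥ 1/(2^m − 1). -/

import Mathlib

open MeasureTheory ENNReal

namespace Stmt14Aux

abbrev Om := ℕ → Bool

def cyl (n : ℕ) (w : Fin n → Bool) : Set Om := {ω | ∀ k : Fin n, ω k = w k}

def Cyls : Set (Set Om) := {s | ∃ n, ∃ w : Fin n → Bool, s = cyl n w}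

lemma isPiSystem_Cyls : IsPiSystem Cyls := by
  rintro s ⟨n, w, rfl⟩ t ⟨n', w', rfl⟩ hne
  obtain ⟨ω, hω1, hω2⟩ := hne
  rcases le_total n n' with h | h
  · refine ⟨n', w', ?_⟩
    apply Set.eq_of_subset_of_subset (Set.inter_subset_right)
    intro ω' hω'
    refine ⟨fun j => ?_, hω'⟩
    have h1 := hω' (Fin.castLE h j)
    have h2 := hω1 j
    have h3 := hω2 (Fin.castLE h j)
    simp only [Fin.coe_castLE] at h1 h3
    rw [h1, ← h3, h2]
  · refine ⟨n, w, ?_⟩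
    apply Set.eq_of_subset_of_subset (Set.inter_subset_left)
    intro ω' hω'
    refine ⟨hω', fun j => ?_⟩
    have h1 := hω' (Fin.castLE h j)
    have h2 := hω2 j
    have h3 := hω1 (Fin.castLE h j)
    simp only [Fin.coe_castLE] at h1 h3
    rw [h1, ← h3, h2]

lemma measurableSet_cyl (n : ℕ) (w : Fin n → Bool) : MeasurableSet (cyl n w) := by
  have : cyl n w = ⋂ k : Fin n, (fun ω : Om => ω (k : ℕ)) ⁻¹' {w k} := by
    ext ω; simp [cyl]
  rw [this]
  exact MeasurableSet.iInter fun k =>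
    (measurable_pi_apply (k : ℕ)) (MeasurableSet.singleton (w k))

lemma coord_eq_union (i : ℕ) (b : Bool) :
    ((fun ω : Om => ω i) ⁻¹' {b}) =
      ⋃ w ∈ {w : Fin (i+1) → Bool | w (Fin.last i) = b}, cyl (i+1) w := by
  ext ω
  simp only [Set.mem_preimage, Set.mem_singleton_iff, Set.mem_iUnion]
  constructor
  · intro h
    refine ⟨fun k => ω k, ?_, fun k => rfl⟩
    simpa [Fin.last]
  · rintro ⟨w, hw, hω⟩
    have := hω (Fin.last i)
    simp only [Fin.val_last] at this
    rw [this, hw]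

lemma generateFrom_Cyls :
    (inferInstance : MeasurableSpace Om) = .generateFrom Cyls := by
  apply le_antisymm
  · apply iSup_le
    intro i
    have hm : @Measurable Om Bool (MeasurableSpace.generateFrom Cyls) _ (fun ω => ω i) := by
      refine @measurable_to_countable' Bool Om _ _ (MeasurableSpace.generateFrom Cyls)
        (fun ω => ω i) fun b => ?_
      rw [coord_eq_union]
      refine MeasurableSet.biUnion (Set.to_countable _) fun w _ => ?_
      exact MeasurableSpace.measurableSet_generateFrom ⟨i + 1, w, rfl⟩
    exact measurable_iff_comap_le.mp hm
  · apply MeasurableSpace.generateFrom_le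
    rintro s ⟨n, w, rfl⟩
    exact measurableSet_cyl n w

end Stmt14Aux

namespace Stmt14Aux

def shift (ω : Om) : Om := fun k => ω (k + 1)

lemma measurable_shift : Measurable shift :=
  measurable_pi_lambda _ fun k => measurable_pi_apply (k + 1)

def flipf (ω : Om) : Om := fun k => !ω k

lemma measurable_flipf : Measurable flipf :=
  measurable_pi_lambda _ fun k => measurable_from_top.comp (measurable_pi_apply k)

lemma cyl_zero (w : Fin 0 → Bool) : cyl 0 w = Set.univ := by
  ext ω; simp [cyl]

lemma prob_ext (P Q : Measure Om) [IsProbabilityMeasure P] [IsFiniteMeasure Q]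
    (hQ : ∀ n (w : Fin n → Bool), Q (cyl n w) = (1 / 2 : ℝ≥0∞) ^ n)
    (hP : ∀ n (w : Fin n → Bool), P (cyl n w) = (1 / 2 : ℝ≥0∞) ^ n) : Q = P := by
  refine ext_of_generate_finite Cyls generateFrom_Cyls isPiSystem_Cyls ?_ ?_
  · rintro s ⟨n, w, rfl⟩
    rw [hQ, hP]
  · have h1 := hQ 0 (fun k => k.elim0)
    have h2 := hP 0 (fun k => k.elim0)
    rw [cyl_zero] at h1 h2
    rw [h1, h2]

lemma P_half (P : Measure Om) [IsProbabilityMeasure P]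
    (hP : ∀ n (w : Fin n → Bool), P (cyl n w) = (1 / 2 : ℝ≥0∞) ^ n)
    (b : Bool) {E : Set Om} (hE : MeasurableSet E) :
    P (shift ⁻¹' E ∩ {ω | ω 0 = b}) = P E / 2 := by
  have hsb : MeasurableSet {ω : Om | ω 0 = b} := by
    have h : {ω : Om | ω 0 = b} = (fun ω : Om => ω 0) ⁻¹' {b} := rfl
    rw [h]
    exact (measurable_pi_apply 0) (MeasurableSet.singleton b)
  set Q : Measure Om := 2 • ((P.restrict {ω | ω 0 = b}).map shift) with hQdef
  have key : ∀ F : Set Om, MeasurableSet F →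
      Q F = 2 * P (shift ⁻¹' F ∩ {ω | ω 0 = b}) := by
    intro F hF
    rw [hQdef]
    rw [Measure.smul_apply, Measure.map_apply measurable_shift hF,
      Measure.restrict_apply (measurable_shift hF)]
    simp [nsmul_eq_mul]
  have h2ne : (2 : ℝ≥0∞) ≠ 0 := two_ne_zero
  have h2nt : (2 : ℝ≥0∞) ≠ ⊤ := ofNat_ne_top
  have hQfin : IsFiniteMeasure Q := by
    constructor
    rw [key _ MeasurableSet.univ]
    exact lt_of_le_of_lt (by
      have : P (shift ⁻¹' Set.univ ∩ {ω | ω 0 = b}) ≤ 1 := prob_le_one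
      calc 2 * P (shift ⁻¹' Set.univ ∩ {ω | ω 0 = b}) ≤ 2 * 1 := by
            exact mul_le_mul_right this 2
        _ = 2 := mul_one 2) (by norm_num)
  have hQcyl : ∀ n (w : Fin n → Bool), Q (cyl n w) = (1 / 2 : ℝ≥0∞) ^ n := by
    intro n w
    rw [key _ (measurableSet_cyl n w)]
    have hset : shift ⁻¹' cyl n w ∩ {ω | ω 0 = b} = cyl (n + 1) (Fin.cons b w) := by
      ext ω
      constructor
      · rintro ⟨h1, h2⟩ k
        refine Fin.cases ?_ ?_ k
        · simpa using h2
        · intro j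
          have := h1 j
          simpa [shift, Fin.cons_succ] using this
      · intro h
        constructor
        · intro j
          have := h j.succ
          simpa [shift, Fin.cons_succ] using this
        · have := h 0
          simpa using this
    rw [hset, hP (n + 1) (Fin.cons b w), pow_succ]
    rw [one_div, mul_comm ((2 : ℝ≥0∞)⁻¹ ^ n), ← mul_assoc,
      ENNReal.mul_inv_cancel h2ne h2nt, one_mul]
  have hQP : Q = P := prob_ext P Q hQcyl hP
  have := key E hE
  rw [hQP] at this
  rw [this, mul_comm, mul_div_assoc, ENNReal.div_self h2ne h2nt, mul_one]

lemma P_flip (P : Measure Om) [IsProbabilityMeasure P]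
    (hP : ∀ n (w : Fin n → Bool), P (cyl n w) = (1 / 2 : ℝ≥0∞) ^ n)
    {E : Set Om} (hE : MeasurableSet E) :
    P (flipf ⁻¹' E) = P E := by
  have hmap : P.map flipf = P := by
    have : IsProbabilityMeasure (P.map flipf) :=
      Measure.isProbabilityMeasure_map measurable_flipf.aemeasurable
    refine prob_ext P (P.map flipf) ?_ hP
    intro n w
    rw [Measure.map_apply measurable_flipf (measurableSet_cyl n w)]
    have hset : flipf ⁻¹' cyl n w = cyl n (fun k => !w k) := by
      ext ω
      simp only [cyl, Set.mem_preimage, Set.mem_setOf_eq, flipf]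
      constructor
      · intro h k
        have := h k
        cases hwk : w k <;> cases hω : ω k <;> simp_all
      · intro h k
        have := h k
        cases hwk : w k <;> cases hω : ω k <;> simp_all
    rw [hset, hP]
  conv_rhs => rw [← hmap]
  rw [Measure.map_apply measurable_flipf hE]

end Stmt14Aux

namespace Stmt14Aux

variable {l : ℝ}

noncomputable def piF (l : ℝ) (ω : Om) : ℝ := ∑' k, (if ω k then l ^ (k + 1) else 0)

lemma summable_geo1 (h0 : 0 ≤ l) (h1 : l < 1) : Summable fun k : ℕ => l ^ (k + 1) := by
  apply Summable.congr ((summable_geometric_of_lt_one h0 h1).mul_left l)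
  intro k
  rw [← pow_succ']

lemma tsum_geo1 (h0 : 0 ≤ l) (h1 : l < 1) : ∑' k : ℕ, l ^ (k + 1) = l / (1 - l) := by
  have : ∀ k : ℕ, l ^ (k + 1) = l * l ^ k := fun k => (pow_succ' l k)
  rw [tsum_congr this, tsum_mul_left, tsum_geometric_of_lt_one h0 h1, div_eq_mul_inv]

lemma term_nonneg (h0 : 0 ≤ l) (ω : Om) (k : ℕ) : 0 ≤ if ω k then l ^ (k + 1) else 0 := by
  split
  · positivity
  · exact le_refl 0
lemma term_le (h0 : 0 ≤ l) (ω : Om) (k : ℕ) : (if ω k then l ^ (k + 1) else 0) ≤ l ^ (k + 1) := by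
  split
  · exact le_refl _
  · positivity

lemma summable_piF (h0 : 0 ≤ l) (h1 : l < 1) (ω : Om) :
    Summable fun k => (if ω k then l ^ (k + 1) else 0) :=
  Summable.of_nonneg_of_le (term_nonneg h0 ω) (term_le h0 ω) (summable_geo1 h0 h1)

lemma piF_nonneg (h0 : 0 ≤ l) (h1 : l < 1) (ω : Om) : 0 ≤ piF l ω :=
  tsum_nonneg (term_nonneg h0 ω)

lemma piF_le (h0 : 0 ≤ l) (h1 : l < 1) (ω : Om) : piF l ω ≤ l / (1 - l) := by
  rw [← tsum_geo1 h0 h1]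
  exact Summable.tsum_le_tsum (term_le h0 ω) (summable_piF h0 h1 ω) (summable_geo1 h0 h1)

lemma piF_shift (h0 : 0 ≤ l) (h1 : l < 1) (ω : Om) :
    piF l ω = (if ω 0 then l else 0) + l * piF l (shift ω) := by
  have hs := summable_piF h0 h1 ω
  rw [piF, Summable.tsum_eq_zero_add hs]
  congr 1
  · simp
  · rw [piF, ← tsum_mul_left]
    apply tsum_congr
    intro k
    by_cases h : ω (k + 1)
    · have hsk : shift ω k = true := h
      simp only [h, hsk, if_true]
      ring
    · have hsk : shift ω k = false := by simp [shift, h]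
      simp [h, hsk]

lemma piF_flip (h0 : 0 ≤ l) (h1 : l < 1) (ω : Om) :
    piF l (flipf ω) = l / (1 - l) - piF l ω := by
  have h : ∀ k, (if flipf ω k then l ^ (k + 1) else 0)
      = l ^ (k + 1) - (if ω k then l ^ (k + 1) else 0) := by
    intro k
    cases hk : ω k <;> simp [flipf, hk]
  rw [piF, tsum_congr h, Summable.tsum_sub (summable_geo1 h0 h1) (summable_piF h0 h1 ω),
    tsum_geo1 h0 h1]
  rfl

lemma measurable_piF (h0 : 0 ≤ l) (h1 : l < 1) : Measurable (piF l) := by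
  apply measurable_of_tendsto_metrizable
    (f := fun n (ω : Om) => ∑ k ∈ Finset.range n, (if ω k then l ^ (k + 1) else 0))
  · intro n
    apply Finset.measurable_sum
    intro k _
    exact Measurable.comp
      (measurable_from_top (f := fun b : Bool => if b then l ^ (k + 1) else 0))
      (measurable_pi_apply k)
  · rw [tendsto_pi_nhds]
    intro ω
    exact (summable_piF h0 h1 ω).hasSum.tendsto_sum_nat

end Stmt14Aux

open Stmt14Aux

/-- Let `λ ∈ (1/2, (√5-1)/2)`. Then there exists `m ∈ ℕ` with
`λ + λ² + ⋯ + λ^m ≥ 1`, and for any such `m` the equilibrium measure of the overlap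
satisfies `μ_λ(τ₀(X_λ) ∩ τ₁(X_λ)) = μ_λ([λ, λ²/(1-λ)]) ≥ 1/(2^m - 1)`, where
`μ_λ(E) = P(π_λ⁻¹(E))`. -/
theorem stmt14 (l : ℝ) (hl : 1 / 2 < l) (hl1 : l < (Real.sqrt 5 - 1) / 2)
    (P : Measure (ℕ → Bool)) [IsProbabilityMeasure P]
    (hP : ∀ (n : ℕ) (w : Fin n → Bool),
      P {ω | ∀ k : Fin n, ω k = w k} = (1 / 2) ^ n)
    (pil : (ℕ → Bool) → ℝ)
    (hpil : ∀ ω, pil ω = ∑' k : ℕ, (if ω k then l ^ (k + 1) else 0)) :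
    (∃ m : ℕ, 1 ≤ ∑ i ∈ Finset.range m, l ^ (i + 1)) ∧
    ∀ m : ℕ, 1 ≤ ∑ i ∈ Finset.range m, l ^ (i + 1) →
      1 / (2 ^ m - 1) ≤ P {ω | pil ω ∈ Set.Icc l (l ^ 2 / (1 - l))} := by
  classical
  have hsq5 : Real.sqrt 5 < 3 := by
    nlinarith [Real.sq_sqrt (by norm_num : (5:ℝ) ≥ 0), Real.sqrt_nonneg 5]
  have hl1' : l < 1 := by linarith
  have h0 : 0 < l := by linarith
  have h0' : (0:ℝ) ≤ l := h0.le
  have h1l : (0:ℝ) < 1 - l := by linarith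
  have hlne1 : l ≠ 1 := ne_of_lt hl1'
  have hpilF : pil = piF l := funext fun ω => hpil ω
  have hP' : ∀ n (w : Fin n → Bool), P (cyl n w) = (1 / 2 : ℝ≥0∞) ^ n := hP
  set T : ℝ := l / (1 - l) with hT
  -- sum identity
  have hSid : ∀ m : ℕ, (1 - l) * (∑ i ∈ Finset.range m, l ^ (i + 1)) = l - l ^ (m + 1) := by
    intro m
    have h1 : ∑ i ∈ Finset.range m, l ^ (i + 1) = l * ∑ i ∈ Finset.range m, l ^ i := by
      rw [Finset.mul_sum]
      exact Finset.sum_congr rfl fun i _ => pow_succ' l i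
    have h2 : ∑ i ∈ Finset.range m, l ^ i = (l ^ m - 1) / (l - 1) := geom_sum_eq hlne1 m
    rw [h1, h2]
    have hl1ne : l - 1 ≠ 0 := by intro h; apply hlne1; linarith
    field_simp
    ring
  -- existence
  obtain ⟨n0, hn0⟩ := exists_pow_lt_of_lt_one (x := 2 * l - 1) (by linarith) hl1'
  have hex : 1 ≤ ∑ i ∈ Finset.range n0, l ^ (i + 1) := by
    have h2 : l ^ (n0 + 1) ≤ l ^ n0 := pow_le_pow_of_le_one h0' hl1'.le (Nat.le_succ n0)
    have h3 := hSid n0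
    nlinarith
  refine ⟨⟨n0, hex⟩, ?_⟩
  intro m hm
  cases m with
  | zero => simp at hm; linarith
  | succ n =>
  set m := n + 1 with hmdef
  -- definitions
  set S : ℕ → ℝ := fun k => ∑ i ∈ Finset.range k, l ^ (i + 1) with hSdef
  have hSsucc : ∀ k, S (k + 1) = S k + l ^ (k + 1) := fun k => Finset.sum_range_succ _ k
  have hS0 : S 0 = 0 := Finset.sum_range_zero _
  set G : ℕ → Set Om := fun k => {ω | 1 ≤ S k + l ^ k * piF l ω} with hGdef
  have hmeaspi := measurable_piF h0' hl1' (l := l)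
  have hGmeas : ∀ k, MeasurableSet (G k) := fun k =>
    measurableSet_le measurable_const ((hmeaspi.const_mul _).const_add _)
  set D : Set Om := {ω | piF l ω ≤ T - 1} with hDdef
  have hDmeas : MeasurableSet D := measurableSet_le hmeaspi measurable_const
  -- G 0 = {1 ≤ piF}
  have hG0 : G 0 = {ω | 1 ≤ piF l ω} := by
    ext ω; simp [hGdef, hS0]
  -- true-branch inclusion
  have hincl : ∀ k, shift ⁻¹' G (k + 1) ∩ {ω | ω 0 = true} ⊆ G k := by
    rintro k ω ⟨h1, h2⟩
    simp only [hGdef, Set.mem_preimage, Set.mem_setOf_eq] at h1 ⊢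
    have hps := piF_shift h0' hl1' ω
    rw [h2] at hps
    norm_num at hps
    rw [hps]
    rw [hSsucc] at h1
    have hring : l ^ k * (l + l * piF l (shift ω))
        = l ^ (k + 1) + l ^ (k + 1) * piF l (shift ω) := by ring
    linarith [hring, h1]
  -- false-branch inclusion at n
  have hinclF : shift ⁻¹' G 0 ∩ {ω | ω 0 = false} ⊆ G n := by
    rintro ω ⟨h1, h2⟩
    simp only [hG0, Set.mem_preimage, Set.mem_setOf_eq] at h1
    simp only [hGdef, Set.mem_setOf_eq]
    have hps := piF_shift h0' hl1' ω
    rw [h2, if_neg (by simp)] at hps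
    rw [hps]
    have hr : l ^ n * (0 + l * piF l (shift ω)) = l ^ (n + 1) * piF l (shift ω) := by
      ring
    have hmul : l ^ (n + 1) * 1 ≤ l ^ (n + 1) * piF l (shift ω) :=
      mul_le_mul_of_nonneg_left h1 (by positivity)
    have hSm : 1 ≤ S n + l ^ (n + 1) := by rw [← hSsucc]; exact hm
    linarith
  -- G m = univ
  have hGm : G m = Set.univ := by
    apply Set.eq_univ_of_forall
    intro ω
    simp only [hGdef, Set.mem_setOf_eq]
    have h1 : 0 ≤ l ^ m * piF l ω := by
      have := piF_nonneg h0' hl1' ω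
      positivity
    linarith [hm, h1]
  -- measure chain
  have htb : ∀ k, P (G (k + 1)) / 2 ≤ P (G k) := by
    intro k
    rw [← P_half P hP' true (hGmeas (k + 1))]
    exact measure_mono (hincl k)
  have haux : ∀ j, (2⁻¹ : ℝ≥0∞) ^ j * P (G j) ≤ P (G 0) := by
    intro j
    induction j with
    | zero => simp
    | succ j ih =>
      calc (2⁻¹ : ℝ≥0∞) ^ (j + 1) * P (G (j + 1))
          = (2⁻¹ : ℝ≥0∞) ^ j * (P (G (j + 1)) / 2) := by
            rw [pow_succ, ENNReal.div_eq_inv_mul]; ring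
        _ ≤ (2⁻¹ : ℝ≥0∞) ^ j * P (G j) := mul_le_mul_right (htb j) _
        _ ≤ P (G 0) := ih
  -- at level n, both branches
  have hdisj : Disjoint (shift ⁻¹' G m ∩ {ω | ω 0 = true})
      (shift ⁻¹' G 0 ∩ {ω | ω 0 = false}) := by
    rw [Set.disjoint_left]
    rintro ω ⟨_, h1⟩ ⟨_, h2⟩
    simp only [Set.mem_setOf_eq] at h1 h2
    rw [h1] at h2
    exact Bool.noConfusion h2
  have hmeasF : MeasurableSet (shift ⁻¹' G 0 ∩ {ω | ω 0 = false}) := by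
    refine (measurable_shift (hGmeas 0)).inter ?_
    have h : {ω : Om | ω 0 = false} = (fun ω : Om => ω 0) ⁻¹' {false} := rfl
    rw [h]
    exact (measurable_pi_apply 0) (MeasurableSet.singleton false)
  have hstep : 1 / 2 + P (G 0) / 2 ≤ P (G n) := by
    have hu : P (shift ⁻¹' G m ∩ {ω | ω 0 = true} ∪ shift ⁻¹' G 0 ∩ {ω | ω 0 = false})
        = P (G m) / 2 + P (G 0) / 2 := by
      rw [measure_union hdisj hmeasF, P_half P hP' true (hGmeas m),
        P_half P hP' false (hGmeas 0)]
    have hsub : shift ⁻¹' G m ∩ {ω | ω 0 = true} ∪ shift ⁻¹' G 0 ∩ {ω | ω 0 = false}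
        ⊆ G n := Set.union_subset (by rw [hmdef]; exact hincl n) hinclF
    have := measure_mono (μ := P) hsub
    rw [hu, hGm, measure_univ] at this
    exact this
  set c : ℝ≥0∞ := P (G 0) with hc
  have hcnt : c ≠ ⊤ := measure_ne_top P _
  have hkey : (2⁻¹ : ℝ≥0∞) ^ m * (1 + c) ≤ c := by
    calc (2⁻¹ : ℝ≥0∞) ^ m * (1 + c) = (2⁻¹ : ℝ≥0∞) ^ n * (2⁻¹ * (1 + c)) := by
          rw [pow_succ]; ring
      _ = (2⁻¹ : ℝ≥0∞) ^ n * (1 / 2 + c / 2) := by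
          rw [mul_add, ENNReal.div_eq_inv_mul, ENNReal.div_eq_inv_mul, mul_one]
      _ ≤ (2⁻¹ : ℝ≥0∞) ^ n * P (G n) := mul_le_mul_right hstep _
      _ ≤ c := haux n
  have h2ne : (2 : ℝ≥0∞) ≠ 0 := two_ne_zero
  have h2nt : (2 : ℝ≥0∞) ≠ ⊤ := ofNat_ne_top
  have hmain : 1 + c ≤ (2 : ℝ≥0∞) ^ m * c := by
    calc 1 + c = (2 : ℝ≥0∞) ^ m * ((2⁻¹ : ℝ≥0∞) ^ m * (1 + c)) := by
          rw [← mul_assoc, ← mul_pow, ENNReal.mul_inv_cancel h2ne h2nt, one_pow, one_mul]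
      _ ≤ (2 : ℝ≥0∞) ^ m * c := mul_le_mul_right hkey _
  have hone : (1 : ℝ≥0∞) ≤ ((2 : ℝ≥0∞) ^ m - 1) * c := by
    have hsm : ((2 : ℝ≥0∞) ^ m - 1) * c = (2 : ℝ≥0∞) ^ m * c - 1 * c :=
      ENNReal.sub_mul (fun _ _ => hcnt)
    rw [hsm, one_mul]
    calc (1 : ℝ≥0∞) = 1 + c - c := (ENNReal.add_sub_cancel_right hcnt).symm
      _ ≤ (2 : ℝ≥0∞) ^ m * c - c := tsub_le_tsub_right hmain c
  have h2m1 : (1 : ℝ≥0∞) < (2 : ℝ≥0∞) ^ m := by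
    calc (1 : ℝ≥0∞) < 2 := one_lt_two
      _ ≤ (2 : ℝ≥0∞) ^ m := le_self_pow₀ one_le_two (Nat.succ_ne_zero n)
  have hne0 : ((2 : ℝ≥0∞) ^ m - 1) ≠ 0 := by
    rw [Ne, tsub_eq_zero_iff_le]
    exact not_le.mpr h2m1
  have hnet : ((2 : ℝ≥0∞) ^ m - 1) ≠ ⊤ :=
    (tsub_le_self.trans_lt (lt_top_iff_ne_top.mpr (ENNReal.pow_ne_top h2nt))).ne
  have hfinal : 1 / ((2 : ℝ≥0∞) ^ m - 1) ≤ c := by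
    calc (1 : ℝ≥0∞) / ((2 : ℝ≥0∞) ^ m - 1)
        ≤ (((2 : ℝ≥0∞) ^ m - 1) * c) / ((2 : ℝ≥0∞) ^ m - 1) :=
          ENNReal.div_le_div_right hone _
      _ = c := by
          rw [mul_comm, mul_div_assoc, ENNReal.div_self hne0 hnet, mul_one]
  -- now show c ≤ P A
  have hDeq : flipf ⁻¹' D = G 0 := by
    ext ω
    simp only [hDdef, hG0, Set.mem_preimage, Set.mem_setOf_eq]
    rw [piF_flip h0' hl1' ω]
    constructor <;> intro h <;> linarith
  have hPD : P D = c := by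
    rw [← P_flip P hP' hDmeas, hDeq]
  have hAtrue : shift ⁻¹' D ∩ {ω | ω 0 = true}
      ⊆ {ω | piF l ω ∈ Set.Icc l (l ^ 2 / (1 - l))} := by
    rintro ω ⟨h1, h2⟩
    simp only [hDdef, Set.mem_preimage, Set.mem_setOf_eq] at h1
    have hps := piF_shift h0' hl1' ω
    rw [h2] at hps
    norm_num at hps
    have hub : l * T = l ^ 2 / (1 - l) := by
      rw [hT]; field_simp
    have hnn := piF_nonneg h0' hl1' (shift ω)
    simp only [Set.mem_setOf_eq, Set.mem_Icc]
    constructor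
    · rw [hps]; nlinarith
    · rw [hps, ← hub]; nlinarith
  have hAfalse : shift ⁻¹' G 0 ∩ {ω | ω 0 = false}
      ⊆ {ω | piF l ω ∈ Set.Icc l (l ^ 2 / (1 - l))} := by
    rintro ω ⟨h1, h2⟩
    simp only [hG0, Set.mem_preimage, Set.mem_setOf_eq] at h1
    have hps := piF_shift h0' hl1' ω
    rw [h2, if_neg (by simp)] at hps
    have hub : l * T = l ^ 2 / (1 - l) := by
      rw [hT]; field_simp
    have hle := piF_le h0' hl1' (shift ω)
    simp only [Set.mem_setOf_eq, Set.mem_Icc]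
    constructor
    · rw [hps]; nlinarith
    · rw [hps, ← hub]; nlinarith
  have hdisj2 : Disjoint (shift ⁻¹' D ∩ {ω | ω 0 = true})
      (shift ⁻¹' G 0 ∩ {ω | ω 0 = false}) := by
    rw [Set.disjoint_left]
    rintro ω ⟨_, h1⟩ ⟨_, h2⟩
    simp only [Set.mem_setOf_eq] at h1 h2
    rw [h1] at h2
    exact Bool.noConfusion h2
  have hcPA : c ≤ P {ω | piF l ω ∈ Set.Icc l (l ^ 2 / (1 - l))} := by
    have hu : P (shift ⁻¹' D ∩ {ω | ω 0 = true} ∪ shift ⁻¹' G 0 ∩ {ω | ω 0 = false})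
        = P D / 2 + P (G 0) / 2 := by
      rw [measure_union hdisj2 hmeasF, P_half P hP' true hDmeas,
        P_half P hP' false (hGmeas 0)]
    have := measure_mono (μ := P) (Set.union_subset hAtrue hAfalse)
    rw [hu, hPD] at this
    calc c = c / 2 + c / 2 := (ENNReal.add_halves c).symm
      _ ≤ _ := this
  rw [hpilF]
  exact le_trans hfinal hcPA
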